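/- Let (X,d) be a metric space and φ : [1,∞) → [1,∞) a continuous strictly increasing function with φ(1) = 1. Define ρ' on X × [1,∞) by ρ'((x,t),(x',t)) = φ(t)·d(x,x') (horizontal segments) and ρ'((x,t),(x,t')) = |t − t'| (vertical segments), and let ρ((x,t),(x',t')) be the infimum of Σ ρ'-lengths over all finite chains of horizontal and vertical segments joining the two points. Then ρ is a metric on X × [1,∞), and the map x ↦ (x,1) is an isometric embedding of (X,d) into (X × [1,∞), ρ). -/

import Mathlib

/-- The half-line `[1,∞)`. -/
abbrev IciOne := {t : ℝ // 1 ≤ t}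

/-- The `ρ'`-cost of a single step: horizontal steps (same height `t`) cost
`φ(t)·d(x,x')`, other steps (same `X`-coordinate, i.e. vertical) cost `|t − t'|`. -/
noncomputable def stepCost {X : Type*} [MetricSpace X] (φ : ℝ → ℝ)
    (p q : X × IciOne) : ℝ :=
  if p.2 = q.2 then φ p.2.1 * dist p.1 q.1 else |p.2.1 - q.2.1|

/-- A valid chain: consecutive points agree in one of the two coordinates. -/
def IsHVChain {X : Type*} (l : List (X × IciOne)) : Prop :=
  List.Chain' (fun p q => p.1 = q.1 ∨ p.2 = q.2) l

/-- Total cost of a chain. -/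
noncomputable def chainCost {X : Type*} [MetricSpace X] (φ : ℝ → ℝ)
    (l : List (X × IciOne)) : ℝ :=
  ((l.zip l.tail).map (fun pq => stepCost φ pq.1 pq.2)).sum

/-- The warped path distance `ρ` on `X × [1,∞)`: the infimum of chain costs over all
chains of horizontal and vertical segments joining the two points. -/
noncomputable def warpDist {X : Type*} [MetricSpace X] (φ : ℝ → ℝ)
    (p q : X × IciOne) : ℝ :=
  sInf {c : ℝ | ∃ l : List (X × IciOne), l.head? = some p ∧ l.getLast? = some q ∧
    IsHVChain l ∧ chainCost φ l = c}

section Aux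
variable {X : Type*} [MetricSpace X] (φ : ℝ → ℝ)

lemma stepCost_nonneg (hge : ∀ t : ℝ, 1 ≤ t → 1 ≤ φ t) (p q : X × IciOne) :
    0 ≤ stepCost φ p q := by
  unfold stepCost
  split
  · exact mul_nonneg (le_trans zero_le_one (hge _ p.2.2)) dist_nonneg
  · exact abs_nonneg _

lemma stepCost_comm (p q : X × IciOne) : stepCost φ p q = stepCost φ q p := by
  unfold stepCost
  by_cases h : p.2 = q.2
  · rw [if_pos h, if_pos h.symm, h, dist_comm]
  · rw [if_neg h, if_neg (fun h' => h h'.symm), abs_sub_comm]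

lemma stepCost_self (p : X × IciOne) : stepCost φ p p = 0 := by
  simp [stepCost]

@[simp] lemma chainCost_nil : chainCost φ ([] : List (X × IciOne)) = 0 := rfl

@[simp] lemma chainCost_singleton (a : X × IciOne) : chainCost φ [a] = 0 := rfl

lemma chainCost_cons_cons (a b : X × IciOne) (l : List (X × IciOne)) :
    chainCost φ (a :: b :: l) = stepCost φ a b + chainCost φ (b :: l) := by
  simp [chainCost, List.zip_cons_cons]

lemma chainCost_nonneg (hge : ∀ t : ℝ, 1 ≤ t → 1 ≤ φ t) (l : List (X × IciOne)) :
    0 ≤ chainCost φ l := by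
  apply List.sum_nonneg
  intro x hx
  obtain ⟨pq, _, rfl⟩ := List.mem_map.mp hx
  exact stepCost_nonneg φ hge _ _

lemma chainCost_append (l1 l2 : List (X × IciOne)) (a b : X × IciOne)
    (h1 : l1.getLast? = some a) (h2 : l2.head? = some b) :
    chainCost φ (l1 ++ l2) = chainCost φ l1 + stepCost φ a b + chainCost φ l2 := by
  induction l1 with
  | nil => simp at h1
  | cons x l1 ih =>
    cases l1 with
    | nil =>
      cases l2 with
      | nil => simp at h2
      | cons y l2 =>
        simp only [List.getLast?_singleton, Option.some_inj] at h1
        simp only [List.head?_cons, Option.some_inj] at h2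
        subst h1; subst h2
        simp [chainCost_cons_cons]
    | cons z l1' =>
      have h1' : (z :: l1').getLast? = some a := by
        rwa [List.getLast?_cons_cons] at h1
      have := ih h1'
      rw [List.cons_append, List.cons_append, chainCost_cons_cons,
        chainCost_cons_cons, ← List.cons_append, this]
      ring

lemma chainCost_reverse (l : List (X × IciOne)) :
    chainCost φ l.reverse = chainCost φ l := by
  induction l with
  | nil => rfl
  | cons a l ih =>
    cases l with
    | nil => rfl
    | cons b l' =>
      rw [List.reverse_cons,
        chainCost_append φ _ [a] b a (by rw [List.getLast?_reverse]; rfl) rfl,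
        ih, chainCost_cons_cons, chainCost_singleton, stepCost_comm]
      ring

omit [MetricSpace X] in
lemma IsHVChain.reverse {l : List (X × IciOne)} (h : IsHVChain l) :
    IsHVChain l.reverse := by
  rw [IsHVChain, List.Chain', List.isChain_reverse]
  exact h.imp fun a b hab => hab.imp Eq.symm Eq.symm

lemma chainCost_lower (g : X × IciOne → X × IciOne → ℝ)
    (hrefl : ∀ a, g a a = 0)
    (htri : ∀ a b c, g a c ≤ g a b + g b c)
    (hstep : ∀ p q : X × IciOne, (p.1 = q.1 ∨ p.2 = q.2) → g p q ≤ stepCost φ p q) :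
    ∀ l : List (X × IciOne), IsHVChain l → ∀ p q : X × IciOne,
      l.head? = some p → l.getLast? = some q → g p q ≤ chainCost φ l := by
  intro l
  induction l with
  | nil => intro _ p q hp; simp at hp
  | cons a l ih =>
    cases l with
    | nil =>
      intro _ p q hp hq
      simp only [List.head?_cons, Option.some_inj] at hp
      simp only [List.getLast?_singleton, Option.some_inj] at hq
      subst hp; subst hq
      simp [hrefl]
    | cons b l' =>
      intro hch p q hp hq
      simp only [List.head?_cons, Option.some_inj] at hp
      subst hp
      rw [List.getLast?_cons_cons] at hq
      rw [IsHVChain, List.Chain', List.isChain_cons_cons] at hch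
      have h1 : g a q ≤ g a b + g b q := htri a b q
      have h2 : g a b ≤ stepCost φ a b := hstep a b hch.1
      have h3 : g b q ≤ chainCost φ (b :: l') := ih hch.2 b q rfl hq
      rw [chainCost_cons_cons]
      linarith

end Aux

section Main
variable {X : Type*} [MetricSpace X] (φ : ℝ → ℝ)

/-- The set of chain costs between two points. -/
def costSet (p q : X × IciOne) : Set ℝ :=
  {c : ℝ | ∃ l : List (X × IciOne), l.head? = some p ∧ l.getLast? = some q ∧
    IsHVChain l ∧ chainCost φ l = c}

lemma warpDist_eq (p q : X × IciOne) : warpDist φ p q = sInf (costSet φ p q) := rfl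

lemma costSet_nonempty (p q : X × IciOne) : (costSet φ p q).Nonempty := by
  refine ⟨_, [p, (q.1, p.2), q], rfl, rfl, ?_, rfl⟩
  refine List.isChain_cons_cons.mpr ⟨Or.inr rfl, List.isChain_cons_cons.mpr ⟨Or.inl rfl, List.isChain_singleton _⟩⟩

lemma costSet_bddBelow (hge : ∀ t : ℝ, 1 ≤ t → 1 ≤ φ t) (p q : X × IciOne) :
    BddBelow (costSet φ p q) := by
  refine ⟨0, fun c hc => ?_⟩
  obtain ⟨l, -, -, -, rfl⟩ := hc
  exact chainCost_nonneg φ hge l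

lemma warpDist_nonneg (hge : ∀ t : ℝ, 1 ≤ t → 1 ≤ φ t) (p q : X × IciOne) :
    0 ≤ warpDist φ p q := by
  refine le_csInf (costSet_nonempty φ p q) fun c hc => ?_
  obtain ⟨l, -, -, -, rfl⟩ := hc
  exact chainCost_nonneg φ hge l

lemma dist_le_warpDist (hge : ∀ t : ℝ, 1 ≤ t → 1 ≤ φ t) (p q : X × IciOne) :
    dist p.1 q.1 ≤ warpDist φ p q := by
  refine le_csInf (costSet_nonempty φ p q) fun c hc => ?_
  obtain ⟨l, h1, h2, h3, rfl⟩ := hc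
  refine chainCost_lower φ (fun a b => dist a.1 b.1) (fun a => dist_self _)
    (fun a b c => dist_triangle _ _ _) ?_ l h3 p q h1 h2
  intro a b hab
  unfold stepCost
  split
  · exact le_mul_of_one_le_left dist_nonneg (hge _ a.2.2)
  · rcases hab with h | h
    · simp only [h, dist_self]; exact abs_nonneg _
    · exact absurd h (by assumption)

lemma abs_le_warpDist (hge : ∀ t : ℝ, 1 ≤ t → 1 ≤ φ t) (p q : X × IciOne) :
    |p.2.1 - q.2.1| ≤ warpDist φ p q := by
  refine le_csInf (costSet_nonempty φ p q) fun c hc => ?_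
  obtain ⟨l, h1, h2, h3, rfl⟩ := hc
  refine chainCost_lower φ (fun a b => |a.2.1 - b.2.1|) (fun a => by simp)
    (fun a b c => abs_sub_le _ _ _) ?_ l h3 p q h1 h2
  intro a b hab
  unfold stepCost
  split
  · rename_i h
    simp only [h, sub_self, abs_zero]
    exact mul_nonneg (le_trans zero_le_one (hge _ b.2.2)) dist_nonneg
  · exact le_refl _

lemma costSet_reverse_subset (p q : X × IciOne) : costSet φ p q ⊆ costSet φ q p := by
  rintro c ⟨l, h1, h2, h3, rfl⟩
  exact ⟨l.reverse, by rw [List.head?_reverse]; exact h2,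
    by rw [List.getLast?_reverse]; exact h1, h3.reverse, chainCost_reverse φ l⟩

lemma warpDist_comm (p q : X × IciOne) : warpDist φ p q = warpDist φ q p := by
  rw [warpDist_eq, warpDist_eq,
    Set.Subset.antisymm (costSet_reverse_subset φ p q) (costSet_reverse_subset φ q p)]

end Main

/-- If `φ : [1,∞) → [1,∞)` is continuous, strictly increasing, with `φ(1) = 1`, then the
warped path distance `ρ` is a metric on `X × [1,∞)`, and `x ↦ (x,1)` is an isometric
embedding of `X` into `(X × [1,∞), ρ)`. -/
theorem warped_product_metric {X : Type*} [MetricSpace X] (φ : ℝ → ℝ)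
    (hcont : ContinuousOn φ (Set.Ici 1)) (hmono : StrictMonoOn φ (Set.Ici 1))
    (hone : φ 1 = 1) (hge : ∀ t : ℝ, 1 ≤ t → 1 ≤ φ t) :
    (∀ p q : X × IciOne, 0 ≤ warpDist φ p q) ∧
    (∀ p q : X × IciOne, warpDist φ p q = warpDist φ q p) ∧
    (∀ p q s : X × IciOne, warpDist φ p s ≤ warpDist φ p q + warpDist φ q s) ∧
    (∀ p q : X × IciOne, warpDist φ p q = 0 ↔ p = q) ∧
    (∀ x y : X, warpDist φ (x, ⟨1, le_refl 1⟩) (y, ⟨1, le_refl 1⟩) = dist x y) := by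
  refine ⟨warpDist_nonneg φ hge, warpDist_comm φ, ?_, ?_, ?_⟩
  · -- triangle inequality
    intro p q s
    refine le_of_forall_pos_le_add fun ε hε => ?_
    obtain ⟨a, ⟨l1, h11, h12, h13, hc1⟩, ha⟩ :=
      Real.lt_sInf_add_pos (costSet_nonempty φ p q) (half_pos hε)
    obtain ⟨b, ⟨l2, h21, h22, h23, hc2⟩, hb⟩ :=
      Real.lt_sInf_add_pos (costSet_nonempty φ q s) (half_pos hε)
    have hhead : (l1 ++ l2).head? = some p := by
      cases l1 with
      | nil => simp at h11
      | cons x t => simpa using h11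
    have hlast : (l1 ++ l2).getLast? = some s := by
      rw [List.getLast?_append, h22]; rfl
    have hchain : IsHVChain (l1 ++ l2) := by
      refine List.isChain_append.mpr ⟨h13, h23, fun x hx y hy => ?_⟩
      rw [h12, Option.mem_some_iff] at hx
      rw [h21, Option.mem_some_iff] at hy
      subst hx; subst hy
      exact Or.inl rfl
    have hcost : chainCost φ (l1 ++ l2) = a + b := by
      rw [chainCost_append φ l1 l2 q q h12 h21, stepCost_self, hc1, hc2]
      ring
    have h1 : warpDist φ p s ≤ a + b := by
      rw [warpDist_eq]
      exact hcost ▸ csInf_le (costSet_bddBelow φ hge p s) ⟨l1 ++ l2, hhead, hlast, hchain, rfl⟩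
    rw [warpDist_eq φ p q, warpDist_eq φ q s]
    linarith
  · -- vanishing iff equal
    intro p q
    constructor
    · intro h
      have h1 : dist p.1 q.1 ≤ 0 := h ▸ dist_le_warpDist φ hge p q
      have h2 : |p.2.1 - q.2.1| ≤ 0 := h ▸ abs_le_warpDist φ hge p q
      have h2' : p.2.1 - q.2.1 = 0 := abs_nonpos_iff.mp h2
      have hx : p.1 = q.1 := by
        have := dist_le_zero.mp h1; exact this
      have ht : p.2 = q.2 := Subtype.ext (by linarith)
      exact Prod.ext hx ht
    · rintro rfl
      refine le_antisymm ?_ (warpDist_nonneg φ hge p p)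
      rw [warpDist_eq]
      exact csInf_le (costSet_bddBelow φ hge p p)
        ⟨[p], rfl, rfl, List.isChain_singleton _, chainCost_singleton φ p⟩
  · -- isometric embedding of the base
    intro x y
    refine le_antisymm ?_ (dist_le_warpDist φ hge (x, ⟨1, le_refl 1⟩) (y, ⟨1, le_refl 1⟩))
    rw [warpDist_eq]
    have hc : chainCost φ [(x, (⟨1, le_refl 1⟩ : IciOne)), (y, ⟨1, le_refl 1⟩)] = dist x y := by
      rw [chainCost_cons_cons, chainCost_singleton, stepCost]
      simp [hone]
    exact hc ▸ csInf_le (costSet_bddBelow φ hge _ _)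
      ⟨[(x, ⟨1, le_refl 1⟩), (y, ⟨1, le_refl 1⟩)], rfl, rfl,
        List.isChain_cons_cons.mpr ⟨Or.inr rfl, List.isChain_singleton _⟩, rfl⟩
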